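/- Under the setup of the previous statement, suppose λ*_i satisfies the two optimality conditions Σ_{j=i}^N dR_j/dλ_i + λ₀ᵀ Σ_{j=i}^N dD_j/dλ_i = 0 and λ*ᵢᵀ + dR_i/dD_i = 0 (where dR_i/dD_i is the row vector with dR_i/dλ_i = (dR_i/dD_i)(dD_i/dλ_i)). Then λ*_i = (I + Σ_{j=i+1}^N dD_j/dD_i)ᵀ λ₀ / (1 + Σ_{j=i+1}^N dR_j/dR_i), i.e., λ*_i equals the equivalent bit allocation map λ'_i. -/
import Mathlib


open scoped RealInnerProductSpace

/-- Theorem 3.2: if `λ*_i` satisfies the two first-order optimality conditions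
`Σ_{j=i}^N dR_j/dλ_i + λ₀ᵀ Σ_{j=i}^N dD_j/dλ_i = 0` and `λ*ᵢᵀ + dR_i/dD_i = 0`,
then `λ*_i = (I + Σ_{j>i} dD_j/dD_i)ᵀ λ₀ / (1 + Σ_{j>i} dR_j/dR_i)`,
i.e. the equivalent bit allocation map `λ'_i`. -/
theorem stmt_5 {d : ℕ} (N i : ℕ) (hiN : i ≤ N)
    (R : ℕ → EuclideanSpace ℝ (Fin d) → ℝ)
    (D : ℕ → EuclideanSpace ℝ (Fin d) → EuclideanSpace ℝ (Fin d))
    (hRdiff : ∀ j, Differentiable ℝ (R j)) (hDdiff : ∀ j, Differentiable ℝ (D j))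
    (lam0 lamstar : EuclideanSpace ℝ (Fin d))
    (r : ℕ → ℝ) (M : ℕ → EuclideanSpace ℝ (Fin d) →L[ℝ] EuclideanSpace ℝ (Fin d))
    (hri : r i = 1) (hMi : M i = ContinuousLinearMap.id ℝ (EuclideanSpace ℝ (Fin d)))
    (hchainR : ∀ j ∈ Finset.Icc i N, fderiv ℝ (R j) lamstar = r j • fderiv ℝ (R i) lamstar)
    (hchainD : ∀ j ∈ Finset.Icc i N,
      fderiv ℝ (D j) lamstar = (M j).comp (fderiv ℝ (D i) lamstar))
    (hden : (1 + ∑ j ∈ Finset.Ioc i N, r j) ≠ 0)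
    (hinv : Function.Bijective (fderiv ℝ (D i) lamstar))
    (rho : EuclideanSpace ℝ (Fin d) →L[ℝ] ℝ)
    (hrho : fderiv ℝ (R i) lamstar = rho.comp (fderiv ℝ (D i) lamstar))
    (hfoc : ∀ v : EuclideanSpace ℝ (Fin d),
      (∑ j ∈ Finset.Icc i N, fderiv ℝ (R j) lamstar v)
        + ⟪lam0, ∑ j ∈ Finset.Icc i N, fderiv ℝ (D j) lamstar v⟫ = 0)
    (hsoc : ∀ v : EuclideanSpace ℝ (Fin d), ⟪lamstar, v⟫ + rho v = 0) :
    lamstar = (1 + ∑ j ∈ Finset.Ioc i N, r j)⁻¹ •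
      (ContinuousLinearMap.adjoint
        (ContinuousLinearMap.id ℝ (EuclideanSpace ℝ (Fin d))
          + ∑ j ∈ Finset.Ioc i N, M j)) lam0 := by
  set T : EuclideanSpace ℝ (Fin d) →L[ℝ] EuclideanSpace ℝ (Fin d) :=
    ContinuousLinearMap.id ℝ (EuclideanSpace ℝ (Fin d)) + ∑ j ∈ Finset.Ioc i N, M j with hT
  set s : ℝ := ∑ j ∈ Finset.Ioc i N, r j with hs
  have key : ∀ w : EuclideanSpace ℝ (Fin d),
      (1 + s) * ⟪lamstar, w⟫ = ⟪(ContinuousLinearMap.adjoint T) lam0, w⟫ := by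
    intro w
    obtain ⟨v, hv⟩ := hinv.2 w
    have h1 : ∀ j ∈ Finset.Icc i N, fderiv ℝ (R j) lamstar v = r j * rho w := by
      intro j hj
      rw [hchainR j hj, hrho]
      simp [hv]
    have h2 : ∀ j ∈ Finset.Icc i N, fderiv ℝ (D j) lamstar v = M j w := by
      intro j hj
      rw [hchainD j hj]
      simp [hv]
    have hfoc' := hfoc v
    rw [Finset.sum_congr rfl h1, Finset.sum_congr rfl h2] at hfoc'
    have hsplit : Finset.Icc i N = Finset.cons i (Finset.Ioc i N) (by simp) :=
      Finset.Icc_eq_cons_Ioc hiN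
    rw [hsplit, Finset.sum_cons, Finset.sum_cons, hri, hMi] at hfoc'
    have hrhow : rho w = -⟪lamstar, w⟫ := by linarith [hsoc w]
    have hTw : (ContinuousLinearMap.id ℝ (EuclideanSpace ℝ (Fin d))) w
        + ∑ j ∈ Finset.Ioc i N, M j w = T w := by
      simp [hT, ContinuousLinearMap.sum_apply]
    have hadj : ⟪(ContinuousLinearMap.adjoint T) lam0, w⟫ = ⟪lam0, T w⟫ :=
      ContinuousLinearMap.adjoint_inner_left T w lam0
    rw [← Finset.sum_mul] at hfoc'
    have : (1 + s) * rho w + ⟪lam0, T w⟫ = 0 := by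
      rw [← hTw, inner_add_right, inner_sum]
      simpa [add_mul, one_mul, mul_comm, inner_add_right, inner_sum] using hfoc'
    rw [hrhow] at this
    rw [hadj]
    linarith
  apply ext_inner_right ℝ
  intro w
  rw [real_inner_smul_left]
  field_simp
  rw [mul_comm]
  exact key w
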